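/- Under the hypotheses above (s_{ij} vanishing on ∂E_{ij}, h_{ij} matching the boundary interpolation curves), the operator T maps C(E) into C(E): for any φ ∈ C(E), Tφ restricted to the grid line {x_α} × I_y equals q_α for each α = 0,...,n, and Tφ restricted to I_x × {y_β} equals r_β for each β = 0,...,m. -/

import Mathlib

open Set


lemma exists_sub_Icc {m : ℕ} (hm : 0 < m) (y : Fin (m + 1) → ℝ) (hy : StrictMono y)
    {b : ℝ} (hb : b ∈ Set.Icc (y 0) (y (Fin.last m))) :
    ∃ j : Fin m, b ∈ Set.Icc (y j.castSucc) (y j.succ) := by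
  classical
  set S : Finset (Fin m) := Finset.univ.filter (fun j => y j.castSucc ≤ b) with hS
  have h0 : (⟨0, hm⟩ : Fin m) ∈ S := by
    have h0' : ((⟨0, hm⟩ : Fin m).castSucc) = (0 : Fin (m+1)) := by
      ext; simp
    simp only [hS, Finset.mem_filter, Finset.mem_univ, true_and, h0']
    exact hb.1
  have hne : S.Nonempty := ⟨_, h0⟩
  set j := S.max' hne with hj
  have hjS : j ∈ S := S.max'_mem hne
  have hjle : y j.castSucc ≤ b := by
    simpa [hS] using hjS
  refine ⟨j, hjle, ?_⟩
  by_contra hlt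
  push_neg at hlt
  have hne_last : j.succ ≠ Fin.last m := by
    intro hEq
    rw [hEq] at hlt
    exact absurd hb.2 (not_le.mpr hlt)
  have hjsucc_lt : (j : ℕ) + 1 < m := by
    have h1 : j.succ < Fin.last m := lt_of_le_of_ne (Fin.le_last _) hne_last
    simpa [Fin.lt_iff_val_lt_val] using h1
  set j' : Fin m := ⟨(j : ℕ) + 1, hjsucc_lt⟩ with hj'
  have hc : (j'.castSucc : Fin (m+1)) = j.succ := by
    ext; simp [hj']
  have hj'S : j' ∈ S := by
    simp only [hS, Finset.mem_filter, Finset.mem_univ, true_and, hc]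
    exact hlt.le
  have h2 := S.le_max' j' hj'S
  have h3 : (j' : ℕ) ≤ (j : ℕ) := h2
  simp [hj'] at h3

lemma fin_cases_cs {n : ℕ} (hn : 0 < n) (α : Fin (n + 1)) :
    ∃ i : Fin n, α = i.castSucc ∨ α = i.succ := by
  rcases eq_or_ne α (Fin.last n) with h | h
  · have hα0 : α ≠ 0 := by
      rw [h]
      simp [Fin.ext_iff]
      omega
    obtain ⟨i, hi⟩ := Fin.exists_succ_eq.mpr hα0
    exact ⟨i, Or.inr hi.symm⟩
  · obtain ⟨i, hi⟩ := Fin.exists_castSucc_eq.mpr h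
    exact ⟨i, Or.inl hi.symm⟩

/-- The operator `T` maps `C(E)` into `C(E)`: for `φ ∈ C(E)`, the function `Tφ`
restricted to each grid line `{x_α} × I_y` equals `q_α`, and restricted to each
`I_x × {y_β}` equals `r_β`. -/
theorem T_maps_CE_to_CE (n m : ℕ) (hn : 0 < n) (hm : 0 < m)
    (x : Fin (n + 1) → ℝ) (y : Fin (m + 1) → ℝ)
    (hx : StrictMono x) (hy : StrictMono y)
    (z : Fin (n + 1) → Fin (m + 1) → ℝ)
    -- the horizontal and vertical contraction homeomorphisms and their inverses
    (Lx Lx' : Fin n → ℝ → ℝ) (Ly Ly' : Fin m → ℝ → ℝ)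
    (hLxmap : ∀ i, MapsTo (Lx i) (Icc (x 0) (x (Fin.last n)))
      (Icc (x i.castSucc) (x i.succ)))
    (hLx'map : ∀ i, MapsTo (Lx' i) (Icc (x i.castSucc) (x i.succ))
      (Icc (x 0) (x (Fin.last n))))
    (hLxinv : ∀ i, ∀ t ∈ Icc (x 0) (x (Fin.last n)), Lx' i (Lx i t) = t)
    (hLxinv' : ∀ i, ∀ t ∈ Icc (x i.castSucc) (x i.succ), Lx i (Lx' i t) = t)
    (hLxcont : ∀ i, ContinuousOn (Lx i) (Icc (x 0) (x (Fin.last n))))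
    (hLx'cont : ∀ i, ContinuousOn (Lx' i) (Icc (x i.castSucc) (x i.succ)))
    (hLxcontr : ∀ i, ∃ c : ℝ, c < 1 ∧ ∀ t ∈ Icc (x 0) (x (Fin.last n)),
      ∀ t' ∈ Icc (x 0) (x (Fin.last n)), |Lx i t - Lx i t'| ≤ c * |t - t'|)
    (hLxend : ∀ i, (Lx i (x 0) = x i.castSucc ∧ Lx i (x (Fin.last n)) = x i.succ) ∨
      (Lx i (x 0) = x i.succ ∧ Lx i (x (Fin.last n)) = x i.castSucc))
    (hLymap : ∀ j, MapsTo (Ly j) (Icc (y 0) (y (Fin.last m)))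
      (Icc (y j.castSucc) (y j.succ)))
    (hLy'map : ∀ j, MapsTo (Ly' j) (Icc (y j.castSucc) (y j.succ))
      (Icc (y 0) (y (Fin.last m))))
    (hLyinv : ∀ j, ∀ t ∈ Icc (y 0) (y (Fin.last m)), Ly' j (Ly j t) = t)
    (hLyinv' : ∀ j, ∀ t ∈ Icc (y j.castSucc) (y j.succ), Ly j (Ly' j t) = t)
    (hLycont : ∀ j, ContinuousOn (Ly j) (Icc (y 0) (y (Fin.last m))))
    (hLy'cont : ∀ j, ContinuousOn (Ly' j) (Icc (y j.castSucc) (y j.succ)))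
    (hLycontr : ∀ j, ∃ c : ℝ, c < 1 ∧ ∀ t ∈ Icc (y 0) (y (Fin.last m)),
      ∀ t' ∈ Icc (y 0) (y (Fin.last m)), |Ly j t - Ly j t'| ≤ c * |t - t'|)
    (hLyend : ∀ j, (Ly j (y 0) = y j.castSucc ∧ Ly j (y (Fin.last m)) = y j.succ) ∨
      (Ly j (y 0) = y j.succ ∧ Ly j (y (Fin.last m)) = y j.castSucc))
    -- vertical scaling factors, Lipschitz, |s| < 1, vanishing on ∂E_{ij}
    (s : Fin n → Fin m → ℝ × ℝ → ℝ)
    (hslip : ∀ i j, ∃ K : NNReal, LipschitzOnWith K (s i j)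
      (Icc (x i.castSucc) (x i.succ) ×ˢ Icc (y j.castSucc) (y j.succ)))
    (hs1 : ∀ i j, ∀ p ∈ Icc (x i.castSucc) (x i.succ) ×ˢ Icc (y j.castSucc) (y j.succ),
      |s i j p| < 1)
    (hsbdx : ∀ i j, ∀ b ∈ Icc (y j.castSucc) (y j.succ),
      s i j (x i.castSucc, b) = 0 ∧ s i j (x i.succ, b) = 0)
    (hsbdy : ∀ i j, ∀ a ∈ Icc (x i.castSucc) (x i.succ),
      s i j (a, y j.castSucc) = 0 ∧ s i j (a, y j.succ) = 0)
    -- the Lipschitz functions g_{ij} on E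
    (g : Fin n → Fin m → ℝ × ℝ → ℝ)
    (hglip : ∀ i j, ∃ K : NNReal, LipschitzOnWith K (g i j)
      (Icc (x 0) (x (Fin.last n)) ×ˢ Icc (y 0) (y (Fin.last m))))
    -- interpolation curves q_α, r_β of the column/row data
    (q : Fin (n + 1) → ℝ → ℝ) (r : Fin (m + 1) → ℝ → ℝ)
    (hqcont : ∀ α, ContinuousOn (q α) (Icc (y 0) (y (Fin.last m))))
    (hrcont : ∀ β, ContinuousOn (r β) (Icc (x 0) (x (Fin.last n))))
    (hqdata : ∀ α β, q α (y β) = z α β) (hrdata : ∀ α β, r β (x α) = z α β)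
    -- the Lipschitz functions h_{ij} with prescribed boundary curves
    (h : Fin n → Fin m → ℝ × ℝ → ℝ)
    (hhlip : ∀ i j, ∃ K : NNReal, LipschitzOnWith K (h i j)
      (Icc (x i.castSucc) (x i.succ) ×ˢ Icc (y j.castSucc) (y j.succ)))
    (hhq : ∀ i j, ∀ b ∈ Icc (y j.castSucc) (y j.succ),
      h i j (x i.castSucc, b) = q i.castSucc b ∧ h i j (x i.succ, b) = q i.succ b)
    (hhr : ∀ i j, ∀ a ∈ Icc (x i.castSucc) (x i.succ),
      h i j (a, y j.castSucc) = r j.castSucc a ∧ h i j (a, y j.succ) = r j.succ a)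
    -- a member φ of C(E)
    (φ : ℝ × ℝ → ℝ)
    (hφcont : ContinuousOn φ (Icc (x 0) (x (Fin.last n)) ×ˢ Icc (y 0) (y (Fin.last m))))
    (hφq : ∀ α, ∀ b ∈ Icc (y 0) (y (Fin.last m)), φ (x α, b) = q α b)
    (hφr : ∀ β, ∀ a ∈ Icc (x 0) (x (Fin.last n)), φ (a, y β) = r β a)
    -- Tφ defined piecewise on the subrectangles
    (Tφ : ℝ × ℝ → ℝ)
    (hT : ∀ i j, ∀ p ∈ Icc (x i.castSucc) (x i.succ) ×ˢ Icc (y j.castSucc) (y j.succ),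
      Tφ p = s i j p * (φ (Lx' i p.1, Ly' j p.2) - g i j (Lx' i p.1, Ly' j p.2)) +
        h i j p) :
    (∀ α, ∀ b ∈ Icc (y 0) (y (Fin.last m)), Tφ (x α, b) = q α b) ∧
    (∀ β, ∀ a ∈ Icc (x 0) (x (Fin.last n)), Tφ (a, y β) = r β a) := by
  constructor
  · intro α b hb
    obtain ⟨i, hi⟩ := fin_cases_cs hn α
    obtain ⟨j, hbj⟩ := exists_sub_Icc hm y hy hb
    have hxmem : x α ∈ Icc (x i.castSucc) (x i.succ) := by
      rcases hi with h | h <;> subst h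
      · exact ⟨le_rfl, hx.monotone (Fin.castSucc_lt_succ (i := i)).le⟩
      · exact ⟨hx.monotone (Fin.castSucc_lt_succ (i := i)).le, le_rfl⟩
    have hp : ((x α, b) : ℝ × ℝ) ∈
        Icc (x i.castSucc) (x i.succ) ×ˢ Icc (y j.castSucc) (y j.succ) :=
      ⟨hxmem, hbj⟩
    rw [hT i j _ hp]
    have hs0 : s i j (x α, b) = 0 := by
      rcases hi with h | h <;> subst h
      · exact (hsbdx i j b hbj).1
      · exact (hsbdx i j b hbj).2
    have hh : h i j (x α, b) = q α b := by
      rcases hi with h' | h' <;> subst h'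
      · exact (hhq i j b hbj).1
      · exact (hhq i j b hbj).2
    simp [hs0, hh]
  · intro β a ha
    obtain ⟨j, hj⟩ := fin_cases_cs hm β
    obtain ⟨i, hai⟩ := exists_sub_Icc hn x hx ha
    have hymem : y β ∈ Icc (y j.castSucc) (y j.succ) := by
      rcases hj with h | h <;> subst h
      · exact ⟨le_rfl, hy.monotone (Fin.castSucc_lt_succ (i := j)).le⟩
      · exact ⟨hy.monotone (Fin.castSucc_lt_succ (i := j)).le, le_rfl⟩
    have hp : ((a, y β) : ℝ × ℝ) ∈
        Icc (x i.castSucc) (x i.succ) ×ˢ Icc (y j.castSucc) (y j.succ) :=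
      ⟨hai, hymem⟩
    rw [hT i j _ hp]
    have hs0 : s i j (a, y β) = 0 := by
      rcases hj with h | h <;> subst h
      · exact (hsbdy i j a hai).1
      · exact (hsbdy i j a hai).2
    have hh : h i j (a, y β) = r β a := by
      rcases hj with h' | h' <;> subst h'
      · exact (hhr i j a hai).1
      · exact (hhr i j a hai).2
    simp [hs0, hh]
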